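/- Let L be an almost-algebraic finite-dimensional Lie algebra over a field of characteristic zero such that every almost-algebraic subalgebra of L is φ-free. Then L is elementary, i.e., every subalgebra of L has trivial Frattini ideal. -/

import Mathlib

/-- The Frattini ideal of a Lie algebra: the largest ideal contained in every
maximal (proper) subalgebra. -/
def frattiniIdeal (F L : Type*) [Field F] [LieRing L] [LieAlgebra F L] : LieIdeal F L :=
  sSup {I : LieIdeal F L | ∀ M : LieSubalgebra F L, IsCoatom M → ∀ x ∈ I, x ∈ M}

/-- A Lie algebra is φ-free if its Frattini ideal is trivial. -/
def IsPhiFree (F L : Type*) [Field F] [LieRing L] [LieAlgebra F L] : Prop :=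
  frattiniIdeal F L = ⊥

/-- A Lie algebra is elementary if every subalgebra has trivial Frattini ideal. -/
def IsElementary (F L : Type*) [Field F] [LieRing L] [LieAlgebra F L] : Prop :=
  ∀ B : LieSubalgebra F L, frattiniIdeal F B = ⊥

/-- A Lie algebra is almost algebraic if ad L contains the semisimple and nilpotent
Jordan components of each of its elements. -/
def IsAlmostAlgebraic (F L : Type*) [Field F] [LieRing L] [LieAlgebra F L] : Prop :=
  ∀ x : L, ∀ s n : Module.End F L, s.IsSemisimple → IsNilpotent n → Commute s n →
    LieAlgebra.ad F L x = s + n →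
    (∃ y : L, LieAlgebra.ad F L y = s) ∧ (∃ z : L, LieAlgebra.ad F L z = n)

open Polynomial

section EndAux

variable {F M : Type*} [Field F] [AddCommGroup M] [Module F M]

lemma pow_apply_mem {f : Module.End F M} {W : Submodule F M} (hf : ∀ x ∈ W, f x ∈ W) (n : ℕ) :
    ∀ x ∈ W, (f ^ n) x ∈ W := by
  induction n with
  | zero => intro x hx; simpa using hx
  | succ n ih =>
      intro x hx
      rw [pow_succ, Module.End.mul_apply]
      exact ih _ (hf x hx)

lemma aeval_apply_mem {f : Module.End F M} {W : Submodule F M} (hf : ∀ x ∈ W, f x ∈ W)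
    (p : F[X]) : ∀ x ∈ W, (aeval f p) x ∈ W := by
  induction p using Polynomial.induction_on' with
  | add p q hp hq =>
      intro x hx
      rw [map_add, LinearMap.add_apply]
      exact W.add_mem (hp x hx) (hq x hx)
  | monomial n a =>
      intro x hx
      rw [aeval_monomial, Module.End.mul_apply, Module.algebraMap_end_apply]
      exact W.smul_mem _ (pow_apply_mem hf n x hx)

lemma commute_aeval' {f u : Module.End F M} (h : Commute u f) (p : F[X]) :
    Commute u (aeval f p) := by
  induction p using Polynomial.induction_on' with
  | add p q hp hq => rw [map_add]; exact hp.add_right hq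
  | monomial n a =>
      rw [aeval_monomial]
      exact (Algebra.commute_algebraMap_right _ _).mul_right (h.pow_right n)

lemma coe_aeval_restrict {f : Module.End F M} {W : Submodule F M} (hf : ∀ x ∈ W, f x ∈ W)
    (p : F[X]) (x : W) :
    ((aeval (f.restrict hf) p x : W) : M) = aeval f p (x : M) := by
  induction p using Polynomial.induction_on' with
  | add p q hp hq => simp [map_add, hp, hq]
  | monomial n a =>
      simp only [aeval_monomial, Module.End.mul_apply, Module.algebraMap_end_apply]
      rw [Module.End.pow_restrict (h' := pow_apply_mem hf n)]
      simp [LinearMap.restrict_coe_apply]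

lemma aeval_restrict_eq {f : Module.End F M} {W : Submodule F M} (hf : ∀ x ∈ W, f x ∈ W)
    (p : F[X]) (hp : ∀ x ∈ W, (aeval f p) x ∈ W) :
    (aeval f p).restrict hp = aeval (f.restrict hf) p := by
  ext x
  rw [LinearMap.restrict_coe_apply, coe_aeval_restrict hf p x]

lemma isNilpotent_restrict_of_isNilpotent {f : Module.End F M} {W : Submodule F M}
    (hf : ∀ x ∈ W, f x ∈ W) (h : IsNilpotent f) : IsNilpotent (f.restrict hf) := by
  obtain ⟨k, hk⟩ := h
  refine ⟨k, ?_⟩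
  rw [Module.End.pow_restrict (h' := pow_apply_mem hf k)]
  ext x
  rw [LinearMap.restrict_coe_apply]
  simp [hk]

end EndAux

section CoatomAux

variable {F K : Type*} [Field F] [LieRing K] [LieAlgebra F K] [FiniteDimensional F K]

lemma exists_le_coatom (C : LieSubalgebra F K) (hC : C ≠ ⊤) :
    ∃ M : LieSubalgebra F K, IsCoatom M ∧ C ≤ M := by
  haveI : IsCoatomic (LieSubalgebra F K) :=
    isCoatomic_of_orderTop_gt_wellFounded (wellFounded_gt)
  rcases IsCoatomic.eq_top_or_exists_le_coatom C with h | h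
  · exact absurd h hC
  · exact h

end CoatomAux

section AdAux

variable {F L : Type*} [Field F] [LieRing L] [LieAlgebra F L]

lemma ad_restrict (A : LieSubalgebra F L) (y : A)
    (hinv : ∀ z ∈ A.toSubmodule, (LieAlgebra.ad F L (y : L)) z ∈ A.toSubmodule) :
    (LieAlgebra.ad F L (y : L)).restrict hinv = LieAlgebra.ad F A y := by
  ext z
  rw [LinearMap.restrict_coe_apply]
  rw [LieAlgebra.ad_apply]
  exact (LieSubalgebra.coe_bracket A y z).symm

end AdAux

section Jordan

variable {F L : Type*} [Field F] [CharZero F] [LieRing L] [LieAlgebra F L] [FiniteDimensional F L]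

lemma exists_jordan_witnesses (h : IsAlmostAlgebraic F L) (x : L) :
    ∃ (y z : L) (p q : F[X]),
      LieAlgebra.ad F L y = aeval (LieAlgebra.ad F L x) p ∧
      LieAlgebra.ad F L z = aeval (LieAlgebra.ad F L x) q ∧
      (aeval (LieAlgebra.ad F L x) p).IsSemisimple ∧
      IsNilpotent (aeval (LieAlgebra.ad F L x) q) ∧
      LieAlgebra.ad F L x = aeval (LieAlgebra.ad F L x) p + aeval (LieAlgebra.ad F L x) q := by
  obtain ⟨n, hn, s, hs, hnil, hss, hsum⟩ :=
    Module.End.exists_isNilpotent_isSemisimple (f := LieAlgebra.ad F L x)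
  rw [Algebra.adjoin_singleton_eq_range_aeval, AlgHom.mem_range] at hn hs
  obtain ⟨q, rfl⟩ := hn
  obtain ⟨p, rfl⟩ := hs
  have hcf : Commute (aeval (LieAlgebra.ad F L x) p) (LieAlgebra.ad F L x) :=
    (commute_aeval' (Commute.refl _) p).symm
  have hc : Commute (aeval (LieAlgebra.ad F L x) p) (aeval (LieAlgebra.ad F L x) q) :=
    commute_aeval' hcf q
  have hsum' : LieAlgebra.ad F L x
      = aeval (LieAlgebra.ad F L x) p + aeval (LieAlgebra.ad F L x) q :=
    hsum.trans (add_comm _ _)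
  obtain ⟨⟨y, hy⟩, ⟨z, hz⟩⟩ := h x _ _ hss hnil hc hsum'
  exact ⟨y, z, p, q, hy, hz, hss, hnil, hsum'⟩

end Jordan

variable (F L : Type*) [Field F] [CharZero F] [LieRing L] [LieAlgebra F L] [FiniteDimensional F L]

theorem elementary_of_almostAlgebraic_subalgebras_phiFree (h : IsAlmostAlgebraic F L)
    (hsub : ∀ B : LieSubalgebra F L, IsAlmostAlgebraic F B → IsPhiFree F B) :
    IsElementary F L := by
  classical
  intro B
  rw [frattiniIdeal, sSup_eq_bot]
  intro I hI
  simp only [Set.mem_setOf_eq] at hI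
  -- choose Jordan witnesses
  choose σ ν P Q hσ hν hPss hQnil hsum using exists_jordan_witnesses h
  -- the image of `I` in `L`
  set Isub : Submodule F L := (I : Submodule F ↥B).map (B : Submodule F L).subtype with hIsubdef
  have mem_Isub : ∀ w : L, w ∈ Isub ↔ ∃ hw : w ∈ B, (⟨w, hw⟩ : ↥B) ∈ I := by
    intro w
    constructor
    · rintro ⟨⟨v, hv⟩, hvI, rfl⟩
      exact ⟨hv, hvI⟩
    · rintro ⟨hw, hwI⟩
      exact ⟨⟨w, hw⟩, hwI, rfl⟩
  have hIsubB : ∀ w ∈ Isub, w ∈ B := by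
    intro w hw
    obtain ⟨hwB, -⟩ := (mem_Isub w).1 hw
    exact hwB
  -- the image of `I` as a Lie subalgebra of `L`
  have IalgP : ∀ {x y : L}, x ∈ Isub → y ∈ Isub → ⁅x, y⁆ ∈ Isub := by
    intro x y hx hy
    obtain ⟨hxB, hxI⟩ := (mem_Isub x).1 hx
    obtain ⟨hyB, hyI⟩ := (mem_Isub y).1 hy
    have hb : (⁅(⟨x, hxB⟩ : ↥B), (⟨y, hyB⟩ : ↥B)⁆ : ↥B) ∈ I := I.lie_mem hyI
    exact (mem_Isub _).2 ⟨B.lie_mem hxB hyB, hb⟩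
  set Ialg : LieSubalgebra F L := { Isub with lie_mem' := IalgP } with hIalgdef
  have mem_Ialg : ∀ w : L, w ∈ Ialg ↔ w ∈ Isub := fun _ => Iff.rfl
  -- the almost algebraic hull
  set A : LieSubalgebra F L := B.normalizer ⊓ Ialg.normalizer with hAdef
  have mem_A : ∀ w : L, w ∈ A ↔ (∀ y ∈ B, ⁅w, y⁆ ∈ B) ∧ ∀ y ∈ Isub, ⁅w, y⁆ ∈ Isub := by
    intro w
    rw [hAdef, LieSubalgebra.mem_inf, LieSubalgebra.mem_normalizer_iff,
      LieSubalgebra.mem_normalizer_iff]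
    exact Iff.rfl
  have hBA : B ≤ A := by
    intro b hb
    rw [mem_A]
    refine ⟨fun y hy => B.lie_mem hb hy, fun y hy => ?_⟩
    obtain ⟨hyB, hyI⟩ := (mem_Isub y).1 hy
    have hbr : (⁅(⟨b, hb⟩ : ↥B), (⟨y, hyB⟩ : ↥B)⁆ : ↥B) ∈ I := I.lie_mem hyI
    exact (mem_Isub _).2 ⟨B.lie_mem hb hyB, hbr⟩
  -- A is closed under the Jordan witnesses
  have hσν : ∀ w, w ∈ A → σ w ∈ A ∧ ν w ∈ A := by
    intro w hw
    obtain ⟨h1, h2⟩ := (mem_A w).1 hw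
    have hinvB : ∀ z ∈ (B : Submodule F L), (LieAlgebra.ad F L w) z ∈ (B : Submodule F L) := by
      intro z hz
      rw [LieAlgebra.ad_apply]
      exact h1 z hz
    have hinvI : ∀ z ∈ Isub, (LieAlgebra.ad F L w) z ∈ Isub := by
      intro z hz
      rw [LieAlgebra.ad_apply]
      exact h2 z hz
    constructor
    · rw [mem_A]
      constructor
      · intro y hy
        have : ⁅σ w, y⁆ = (LieAlgebra.ad F L (σ w)) y := rfl
        rw [this, hσ w]
        exact aeval_apply_mem hinvB (P w) y hy
      · intro y hy
        have : ⁅σ w, y⁆ = (LieAlgebra.ad F L (σ w)) y := rfl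
        rw [this, hσ w]
        exact aeval_apply_mem hinvI (P w) y hy
    · rw [mem_A]
      constructor
      · intro y hy
        have : ⁅ν w, y⁆ = (LieAlgebra.ad F L (ν w)) y := rfl
        rw [this, hν w]
        exact aeval_apply_mem hinvB (Q w) y hy
      · intro y hy
        have : ⁅ν w, y⁆ = (LieAlgebra.ad F L (ν w)) y := rfl
        rw [this, hν w]
        exact aeval_apply_mem hinvI (Q w) y hy
  haveI : FiniteDimensional F ↥A :=
    FiniteDimensional.of_injective (A.incl.toLinearMap)
      (fun a b hab => Subtype.val_injective hab)
  haveI : FiniteDimensional F ↥B :=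
    FiniteDimensional.of_injective (B.incl.toLinearMap)
      (fun a b hab => Subtype.val_injective hab)
  -- A is almost algebraic
  have haa : IsAlmostAlgebraic F ↥A := by
    intro x s n hs hn hc heq
    have hXA : (x : L) ∈ A := x.2
    have hinvA : ∀ z ∈ A.toSubmodule, (LieAlgebra.ad F L (x : L)) z ∈ A.toSubmodule := by
      intro z hz
      rw [LieAlgebra.ad_apply]
      exact A.lie_mem hXA hz
    have hSinv := aeval_apply_mem hinvA (P (x : L))
    have hNinv := aeval_apply_mem hinvA (Q (x : L))
    have adA : (LieAlgebra.ad F L (x : L)).restrict hinvA = LieAlgebra.ad F ↥A x :=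
      ad_restrict A x hinvA
    set s₀ : Module.End F ↥A := (aeval (LieAlgebra.ad F L (x : L)) (P (x : L))).restrict hSinv
      with hs₀def
    set n₀ : Module.End F ↥A := (aeval (LieAlgebra.ad F L (x : L)) (Q (x : L))).restrict hNinv
      with hn₀def
    have hs₀p : s₀ = aeval (LieAlgebra.ad F ↥A x) (P (x : L)) := by
      rw [hs₀def, aeval_restrict_eq hinvA, adA]
    have hn₀p : n₀ = aeval (LieAlgebra.ad F ↥A x) (Q (x : L)) := by
      rw [hn₀def, aeval_restrict_eq hinvA, adA]
    have hs₀ss : s₀.IsSemisimple := (hPss (x : L)).restrict hSinv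
    have hn₀nil : IsNilpotent n₀ := isNilpotent_restrict_of_isNilpotent hNinv (hQnil (x : L))
    have hsum₀ : LieAlgebra.ad F ↥A x = s₀ + n₀ := by
      rw [← adA]
      ext z
      rw [LinearMap.restrict_coe_apply]
      conv_lhs => rw [hsum (x : L)]
      rw [LinearMap.add_apply]
      simp only [LinearMap.add_apply, AddSubmonoid.coe_add, Submodule.coe_toAddSubmonoid,
        hs₀def, hn₀def, LinearMap.restrict_coe_apply]
      rw [Submodule.coe_add, LinearMap.restrict_coe_apply, LinearMap.restrict_coe_apply]
    have hcPx : Commute (aeval (LieAlgebra.ad F L (x : L)) (P (x : L)))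
        (LieAlgebra.ad F L (x : L)) := (commute_aeval' (Commute.refl _) (P (x : L))).symm
    have hc₀ : Commute s₀ n₀ :=
      LinearMap.restrict_commute (commute_aeval' hcPx (Q (x : L))) hSinv hNinv
    have hcsx : Commute s (LieAlgebra.ad F ↥A x) := by
      rw [heq]; exact (Commute.refl s).add_right hc
    have hcnx : Commute n (LieAlgebra.ad F ↥A x) := by
      rw [heq]; exact hc.symm.add_right (Commute.refl n)
    have hss₀ : Commute s s₀ := by rw [hs₀p]; exact commute_aeval' hcsx (P (x : L))
    have hnn₀ : Commute n n₀ := by rw [hn₀p]; exact commute_aeval' hcnx (Q (x : L))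
    have hkey : s - s₀ = n₀ - n := by
      rw [sub_eq_sub_iff_add_eq_add, ← heq, hsum₀, add_comm]
    have hsemi : (s - s₀).IsSemisimple := Module.End.IsSemisimple.sub_of_commute hss₀ hs hs₀ss
    have hnil' : IsNilpotent (s - s₀) := by
      rw [hkey]
      exact Commute.isNilpotent_sub hnn₀.symm hn₀nil hn
    have hzero : s - s₀ = 0 := Module.End.eq_zero_of_isNilpotent_isSemisimple hnil' hsemi
    have hseq : s = s₀ := by rwa [sub_eq_zero] at hzero
    have hneq : n = n₀ := by
      have : n₀ - n = 0 := by rw [← hkey, hzero]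
      have := sub_eq_zero.1 this
      exact this.symm
    refine ⟨⟨⟨σ (x : L), (hσν (x : L) hXA).1⟩, ?_⟩, ⟨⟨ν (x : L), (hσν (x : L) hXA).2⟩, ?_⟩⟩
    · have hinvσ : ∀ z ∈ A.toSubmodule,
          (LieAlgebra.ad F L (σ (x : L))) z ∈ A.toSubmodule := by
        intro z hz
        rw [hσ (x : L)]
        exact hSinv z hz
      rw [hseq, ← ad_restrict A ⟨σ (x : L), (hσν (x : L) hXA).1⟩ hinvσ]
      ext z
      rw [LinearMap.restrict_coe_apply, hs₀def, LinearMap.restrict_coe_apply, hσ (x : L)]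
    · have hinvν : ∀ z ∈ A.toSubmodule,
          (LieAlgebra.ad F L (ν (x : L))) z ∈ A.toSubmodule := by
        intro z hz
        rw [hν (x : L)]
        exact hNinv z hz
      rw [hneq, ← ad_restrict A ⟨ν (x : L), (hσν (x : L) hXA).2⟩ hinvν]
      ext z
      rw [LinearMap.restrict_coe_apply, hn₀def, LinearMap.restrict_coe_apply, hν (x : L)]
  -- A is φ-free
  have hphi : frattiniIdeal F ↥A = ⊥ := hsub A haa
  -- push `I` forward to an ideal of `A`
  have hJlie : ∀ {x m : ↥A}, (m : L) ∈ Isub → ((⁅x, m⁆ : ↥A) : L) ∈ Isub := by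
    intro x m hm
    have hx : (x : L) ∈ A := x.2
    obtain ⟨-, h2⟩ := (mem_A (x : L)).1 hx
    have : ((⁅x, m⁆ : ↥A) : L) = ⁅(x : L), (m : L)⁆ := LieSubalgebra.coe_bracket A x m
    rw [this]
    exact h2 (m : L) hm
  set J : LieIdeal F ↥A :=
    { toSubmodule := Isub.comap (A : Submodule F L).subtype
      lie_mem := fun {x m} hm => hJlie hm } with hJdef
  have mem_J : ∀ a : ↥A, a ∈ J ↔ (a : L) ∈ Isub := fun _ => Iff.rfl
  -- J is contained in every maximal subalgebra of A
  have hJfrat : ∀ M : LieSubalgebra F ↥A, IsCoatom M → ∀ a ∈ J, a ∈ M := by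
    intro M hM a haJ
    by_contra haM
    -- the subalgebra J ⊔ M
    have hPlie : ∀ {u v : ↥A}, u ∈ (J : Submodule F ↥A) ⊔ (M : Submodule F ↥A) →
        v ∈ (J : Submodule F ↥A) ⊔ (M : Submodule F ↥A) →
        ⁅u, v⁆ ∈ (J : Submodule F ↥A) ⊔ (M : Submodule F ↥A) := by
      intro u v hu hv
      obtain ⟨j, hj, m, hm, rfl⟩ := Submodule.mem_sup.1 hu
      obtain ⟨j', hj', m', hm', rfl⟩ := Submodule.mem_sup.1 hv
      have e : ⁅j + m, j' + m'⁆ = (⁅j, j'⁆ + ⁅j, m'⁆ + ⁅m, j'⁆) + ⁅m, m'⁆ := by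
        rw [add_lie, lie_add, lie_add]
        abel
      rw [e]
      refine Submodule.add_mem _ (Submodule.mem_sup_left ?_) (Submodule.mem_sup_right ?_)
      · refine (J : Submodule F ↥A).add_mem ((J : Submodule F ↥A).add_mem ?_ ?_) ?_
        · exact lie_mem_left F ↥A J _ _ hj
        · exact lie_mem_left F ↥A J _ _ hj
        · exact lie_mem_right F ↥A J _ _ hj'
      · exact M.lie_mem hm hm'
    set Pa : LieSubalgebra F ↥A :=
      { toSubmodule := (J : Submodule F ↥A) ⊔ (M : Submodule F ↥A)
        lie_mem' := hPlie } with hPadef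
    have hMP : M < Pa := by
      constructor
      · intro m hm
        exact Submodule.mem_sup_right hm
      · intro hPM
        exact haM (hPM (Submodule.mem_sup_left haJ))
    have hPtop : Pa = ⊤ := hM.2 Pa hMP
    -- case split on whether the copy of B inside A lies in M
    by_cases hBM : ∀ b : ↥A, (b : L) ∈ B → b ∈ M
    · exact haM (hBM a (hIsubB _ ((mem_J a).1 haJ)))
    · push_neg at hBM
      obtain ⟨b₀, hb₀B, hb₀M⟩ := hBM
      -- pull M back to B
      set ι : ↥B →ₗ⁅F⁆ ↥A := LieSubalgebra.inclusion hBA with hιdef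
      set Q' : LieSubalgebra F ↥B := LieSubalgebra.comap ι M with hQdef
      have mem_Q : ∀ b : ↥B, b ∈ Q' ↔ ι b ∈ M := fun _ => Iff.rfl
      have hQtop : Q' ≠ ⊤ := by
        intro hQ
        apply hb₀M
        have : (⟨(b₀ : L), hb₀B⟩ : ↥B) ∈ Q' := hQ ▸ trivial
        have h2 := (mem_Q _).1 this
        have : ι (⟨(b₀ : L), hb₀B⟩ : ↥B) = b₀ := Subtype.ext rfl
        rwa [this] at h2
      obtain ⟨M', hM', hQM'⟩ := exists_le_coatom Q' hQtop
      have : ∀ b : ↥B, b ∈ M' := by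
        intro b
        have hbA : ι b ∈ Pa := hPtop ▸ trivial
        obtain ⟨j, hj, m, hm, hjm⟩ := Submodule.mem_sup.1 hbA
        -- j comes from I
        have hjI : (j : L) ∈ Isub := hj
        obtain ⟨hjB, hjmem⟩ := (mem_Isub (j : L)).1 hjI
        have hj' : (⟨(j : L), hjB⟩ : ↥B) ∈ M' := hI M' hM' _ hjmem
        -- m comes from B
        have hv : (j : L) + (m : L) = (b : L) := by
          have := congrArg (fun t : ↥A => (t : L)) hjm
          have h' : (j : L) + (m : L) = ((ι b : ↥A) : L) := by simpa using this
          exact h'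
        have hmB : (m : L) ∈ B := by
          rw [eq_sub_of_add_eq' hv]
          exact B.sub_mem b.2 hjB
        have hmQ : (⟨(m : L), hmB⟩ : ↥B) ∈ Q' := by
          rw [mem_Q]
          have : ι (⟨(m : L), hmB⟩ : ↥B) = m := Subtype.ext rfl
          rw [this]
          exact hm
        have hm' : (⟨(m : L), hmB⟩ : ↥B) ∈ M' := hQM' hmQ
        have hbeq : b = (⟨(j : L), hjB⟩ : ↥B) + (⟨(m : L), hmB⟩ : ↥B) := by
          apply Subtype.ext
          exact hv.symm
        rw [hbeq]
        exact M'.add_mem hj' hm'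
      exact hM'.1 (eq_top_iff.2 fun b _ => this b)
  -- conclude J = ⊥
  have hJbot : J = ⊥ := by
    have hle : J ≤ frattiniIdeal F ↥A := le_sSup hJfrat
    rw [hphi] at hle
    exact le_bot_iff.1 hle
  -- conclude I = ⊥
  rw [LieSubmodule.eq_bot_iff]
  intro m hm
  have hmA : (m : L) ∈ A := hBA m.2
  have hmJ : (⟨(m : L), hmA⟩ : ↥A) ∈ J := by
    rw [mem_J]
    exact (mem_Isub _).2 ⟨m.2, by simpa using hm⟩
  rw [hJbot] at hmJ
  have : ((⟨(m : L), hmA⟩ : ↥A) : L) = 0 := by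
    rw [LieSubmodule.mem_bot] at hmJ
    rw [hmJ]
    rfl
  exact Subtype.ext this
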